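/- Fix σ_a ∈ ℝ with 0 < σ_a² < 1, let f(x) = (√(1−x²) + (π − arccos x)·x)/π, and let g : [−1,1] → [−1,1] send t to the unique fixed point of x = σ_a²·f(x) + (1−σ_a²)·t. Then g is differentiable on (−1,1) with g′(t) = (1−σ_a²)/(1 − σ_a²·f′(g(t))) for every t ∈ (−1,1), where f′(x) = (π − arccos x)/π; in particular, writing ∠* = g(0), one has g′(0) = (1−σ_a²)/(1 − σ_a²·f′(∠*)). -/

import Mathlib

open Real Set

/-- The dual kernel of the normalized ReLU activation `φ(x) = √2·max(x,0)`. -/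
noncomputable def fDual (x : ℝ) : ℝ :=
  (Real.sqrt (1 - x ^ 2) + (Real.pi - Real.arccos x) * x) / Real.pi

/-- The derivative `f′(x) = (π − arccos x)/π` of the dual kernel. -/
noncomputable def fDual' (x : ℝ) : ℝ := (Real.pi - Real.arccos x) / Real.pi

lemma fDual_hasDerivAt {x : ℝ} (hx : x ∈ Ioo (-1:ℝ) 1) :
    HasDerivAt fDual (fDual' x) x := by
  obtain ⟨h1, h2⟩ := hx
  have hx2 : (1 : ℝ) - x ^ 2 ≠ 0 := by nlinarith
  have hs : Real.sqrt (1 - x ^ 2) ≠ 0 :=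
    ne_of_gt (Real.sqrt_pos.mpr (by nlinarith))
  have hsq : HasDerivAt (fun x : ℝ => Real.sqrt (1 - x ^ 2))
      (-(2*x) / (2 * Real.sqrt (1 - x ^ 2))) x := by
    have : HasDerivAt (fun x : ℝ => 1 - x ^ 2) (-(2*x)) x := by
      simpa using ((hasDerivAt_pow 2 x).const_sub 1)
    exact this.sqrt hx2
  have harc : HasDerivAt Real.arccos (-(1 / Real.sqrt (1 - x ^ 2))) x :=
    Real.hasDerivAt_arccos (by linarith) (by linarith)
  have hmul : HasDerivAt (fun x : ℝ => (Real.pi - Real.arccos x) * x)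
      ((0 - -(1 / Real.sqrt (1 - x ^ 2))) * x + (Real.pi - Real.arccos x) * 1) x :=
    ((hasDerivAt_const x Real.pi).sub harc).mul (hasDerivAt_id x)
  have := (hsq.add hmul).div_const Real.pi
  refine (show HasDerivAt fDual _ x from this).congr_deriv ?_
  unfold fDual'
  have hpi := Real.pi_ne_zero
  field_simp
  ring

lemma fDual'_mem {x : ℝ} (hx : x ∈ Icc (-1:ℝ) 1) : fDual' x ∈ Icc (0:ℝ) 1 := by
  have h1 := Real.arccos_nonneg x
  have h2 := Real.arccos_le_pi x
  have hpi := Real.pi_pos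
  unfold fDual'
  constructor
  · apply div_nonneg <;> linarith
  · rw [div_le_one hpi]; linarith

lemma fDual_cont : Continuous fDual := by
  unfold fDual
  exact ((Real.continuous_sqrt.comp (by continuity)).add
    ((continuous_const.sub Real.continuous_arccos).mul continuous_id)).div_const _

lemma fDual_lip {x y : ℝ} (hx : x ∈ Icc (-1:ℝ) 1) (hy : y ∈ Icc (-1:ℝ) 1) :
    |fDual x - fDual y| ≤ |x - y| := by
  wlog h : x < y generalizing x y
  · rcases eq_or_lt_of_le (not_lt.mp h) with h' | h'
    · simp [h']
    · rw [abs_sub_comm (fDual x), abs_sub_comm x]; exact this hy hx h'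
  have hsub : Ioo x y ⊆ Ioo (-1:ℝ) 1 := Ioo_subset_Ioo hx.1 hy.2
  obtain ⟨c, hc, hc'⟩ := exists_hasDerivAt_eq_slope fDual fDual' h
    (fDual_cont.continuousOn) (fun z hz => fDual_hasDerivAt (hsub hz))
  have hb := fDual'_mem (⟨le_of_lt (hsub hc).1, le_of_lt (hsub hc).2⟩)
  rw [eq_div_iff (by linarith : y - x ≠ 0)] at hc'
  have : fDual y - fDual x = fDual' c * (y - x) := hc'.symm
  rw [abs_sub_comm, this, abs_sub_comm x, abs_mul, abs_of_nonneg hb.1,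
    abs_of_nonneg (by linarith : (0:ℝ) ≤ y - x)]
  nlinarith [hb.2, abs_nonneg (y-x)]

lemma fDual_mem {x : ℝ} (hx : x ∈ Icc (-1:ℝ) 1) : fDual x ∈ Icc (0:ℝ) 1 := by
  have hm1 : fDual (-1) = 0 := by
    simp [fDual, Real.arccos_neg_one]
  have h1 : fDual 1 = 1 := by
    simp [fDual, Real.arccos_one, Real.pi_ne_zero]
  have mono : ∀ a b : ℝ, a ∈ Icc (-1:ℝ) 1 → b ∈ Icc (-1:ℝ) 1 → a < b →
      fDual a ≤ fDual b := by
    intro a b ha hb hab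
    have hsub : Ioo a b ⊆ Ioo (-1:ℝ) 1 := Ioo_subset_Ioo ha.1 hb.2
    obtain ⟨c, hc, hc'⟩ := exists_hasDerivAt_eq_slope fDual fDual' hab
      (fDual_cont.continuousOn) (fun z hz => fDual_hasDerivAt (hsub hz))
    have hb0 := fDual'_mem (⟨le_of_lt (hsub hc).1, le_of_lt (hsub hc).2⟩)
    rw [eq_div_iff (by linarith : b - a ≠ 0)] at hc'
    have : fDual b - fDual a = fDual' c * (b - a) := hc'.symm
    nlinarith [hb0.1]
  constructor
  · rcases eq_or_lt_of_le hx.1 with h | h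
    · rw [← h, hm1]
    · rw [← hm1]; exact mono _ _ (by norm_num) hx h
  · rcases eq_or_lt_of_le hx.2 with h | h
    · rw [h, h1]
    · rw [← h1]; exact mono _ _ hx (by norm_num) h

theorem stmt_8 (σa : ℝ) (hσ0 : 0 < σa ^ 2) (hσ1 : σa ^ 2 < 1)
    (g : ℝ → ℝ)
    (hg : ∀ t ∈ Set.Icc (-1 : ℝ) 1,
      g t ∈ Set.Icc (-1 : ℝ) 1 ∧ g t = σa ^ 2 * fDual (g t) + (1 - σa ^ 2) * t) :
    (∀ t ∈ Set.Ioo (-1 : ℝ) 1,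
      HasDerivAt g ((1 - σa ^ 2) / (1 - σa ^ 2 * fDual' (g t))) t) ∧
    HasDerivAt g ((1 - σa ^ 2) / (1 - σa ^ 2 * fDual' (g 0))) 0 := by
  have main : ∀ t ∈ Set.Ioo (-1 : ℝ) 1,
      HasDerivAt g ((1 - σa ^ 2) / (1 - σa ^ 2 * fDual' (g t))) t := by
    intro t ht
    have htI : t ∈ Icc (-1:ℝ) 1 := Ioo_subset_Icc_self ht
    obtain ⟨hgI, hgeq⟩ := hg t htI
    -- g t is in the open interval
    have hfB := fDual_mem hgI
    have hgt : g t ∈ Ioo (-1:ℝ) 1 := by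
      constructor
      · nlinarith [hfB.1, ht.1]
      · nlinarith [hfB.2, ht.2]
    -- continuity of g at t
    have hIccnhds : Icc (-1:ℝ) 1 ∈ nhds t :=
      mem_nhds_iff.mpr ⟨Ioo (-1) 1, Ioo_subset_Icc_self, isOpen_Ioo, ht⟩
    have hlip : LipschitzOnWith 1 g (Icc (-1:ℝ) 1) := by
      apply LipschitzOnWith.of_dist_le_mul
      intro a ha b hb
      obtain ⟨haI, haeq⟩ := hg a ha
      obtain ⟨hbI, hbeq⟩ := hg b hb
      have hf := fDual_lip haI hbI
      rw [Real.dist_eq, Real.dist_eq]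
      have heq : g a - g b = σa ^ 2 * (fDual (g a) - fDual (g b)) + (1 - σa ^ 2) * (a - b) := by
        linear_combination haeq - hbeq
      have h1 : |g a - g b| ≤ σa ^ 2 * |fDual (g a) - fDual (g b)| + (1 - σa ^ 2) * |a - b| :=
        calc |g a - g b|
            = |σa ^ 2 * (fDual (g a) - fDual (g b)) + (1 - σa ^ 2) * (a - b)| := by rw [heq]
          _ ≤ |σa ^ 2 * (fDual (g a) - fDual (g b))| + |(1 - σa ^ 2) * (a - b)| := abs_add_le _ _
          _ = _ := by
              rw [abs_mul, abs_mul, abs_of_nonneg hσ0.le,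
                abs_of_nonneg (by linarith : (0:ℝ) ≤ 1 - σa ^ 2)]
      have h2 : σa ^ 2 * |fDual (g a) - fDual (g b)| ≤ σa ^ 2 * |g a - g b| :=
        mul_le_mul_of_nonneg_left hf hσ0.le
      simp only [NNReal.coe_one, one_mul]
      nlinarith [h1, h2]
    have hcont : ContinuousAt g t :=
      (hlip.continuousOn).continuousAt hIccnhds
    -- the inverse function
    set k : ℝ → ℝ := fun x => (x - σa ^ 2 * fDual x) / (1 - σa ^ 2) with hk
    have hkderiv : HasDerivAt k ((1 - σa ^ 2 * fDual' (g t)) / (1 - σa ^ 2)) (g t) := by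
      exact ((hasDerivAt_id (g t)).sub
        ((fDual_hasDerivAt hgt).const_mul (σa ^ 2))).div_const _
    have hf'B := fDual'_mem (Ioo_subset_Icc_self hgt)
    have hne : (1 - σa ^ 2 * fDual' (g t)) / (1 - σa ^ 2) ≠ 0 := by
      apply ne_of_gt
      apply div_pos _ (by linarith)
      nlinarith [hf'B.2]
    have hev : ∀ᶠ y in nhds t, k (g y) = y := by
      filter_upwards [hIccnhds] with y hy
      obtain ⟨_, hyeq⟩ := hg y hy
      have : g y - σa ^ 2 * fDual (g y) = (1 - σa ^ 2) * y := by linarith [hyeq]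
      simp only [hk]
      rw [this, mul_comm, mul_div_assoc,
        div_self (ne_of_gt (by linarith : (0:ℝ) < 1 - σa ^ 2)), mul_one]
    have := HasDerivAt.of_local_left_inverse hcont hkderiv hne hev
    rwa [inv_div] at this
  exact ⟨main, main 0 (by norm_num)⟩
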